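/- Let h, h' : {0,...,k} → ℝ be defined by h(i) = |B_i| − |E_i| and h'(i) = |B'_i| − |E'_i| for prefix/suffix arcs of B and E in a minimal-triple partition with p(V) < |V|/2. Then h and h' are nonnegative. Moreover, with i maximal such that h(i) ≤ 3b/8 − e/2 and i' maximal such that h'(i') ≤ 3b/8 − e/2 (assuming 3b/8 − e/2 > 0), if i + i' > k then the middle arc E² = E_i \ E_{k−i'+1} satisfies |E²| ≥ b/4, and hence min{|E¹|, |E³|} ≤ (e − b/4)/2 where E¹ = E_{k−i'+1} and E³ = E'_{k−i+1}. -/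

import Mathlib

open Fin.NatCast

/-- The arc of `l` consecutive elements of the circular sequence on `Fin n`
starting at `s`. -/
def arcSet (n : ℕ) [NeZero n] (s : Fin n) (l : ℕ) : Finset (Fin n) :=
  (Finset.range l).image (fun k : ℕ => s + (k : Fin n))

/-- The size (total weight) of the arc of length `l` starting at `s`. -/
def arcSum (n : ℕ) [NeZero n] (V : Fin n → ℝ) (s : Fin n) (l : ℕ) : ℝ :=
  ∑ k ∈ Finset.range l, V (s + (k : Fin n))

/-- Length of a half-circle: `(n+1)/2`. -/
def hcLen (n : ℕ) : ℕ := (n + 1) / 2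

/-- The half-circle (arc of `(n+1)/2` consecutive elements) starting at `s`. -/
def hcSet (n : ℕ) [NeZero n] (s : Fin n) : Finset (Fin n) := arcSet n s (hcLen n)

/-- The size of the half-circle starting at `s`. -/
def hcSum (n : ℕ) [NeZero n] (V : Fin n → ℝ) (s : Fin n) : ℝ := arcSum n V s (hcLen n)

/-- The potential of an element `v`: the minimum size of a half-circle covering `v`. -/
noncomputable def pot (n : ℕ) [NeZero n] (V : Fin n → ℝ) (v : Fin n) : ℝ :=
  sInf {x : ℝ | ∃ s : Fin n, v ∈ hcSet n s ∧ x = hcSum n V s}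

/-- The potential `p(V)` of the circular sequence: the maximum potential of an element. -/
noncomputable def potV (n : ℕ) [NeZero n] (V : Fin n → ℝ) : ℝ :=
  sSup {x : ℝ | ∃ v : Fin n, x = pot n V v}

/-- A minimal covering triple of half-circles: the three half-circles cover everything,
`s1` has minimum size among all half-circles, all three have size at most `p(V)`, and
none of them can be replaced by a half-circle of strictly smaller size keeping the
covering property. -/
def MinTriple (n : ℕ) [NeZero n] (V : Fin n → ℝ) (s1 s2 s3 : Fin n) : Prop :=
  hcSet n s1 ∪ hcSet n s2 ∪ hcSet n s3 = Finset.univ ∧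
  (∀ t, hcSum n V s1 ≤ hcSum n V t) ∧
  hcSum n V s1 ≤ potV n V ∧ hcSum n V s2 ≤ potV n V ∧ hcSum n V s3 ≤ potV n V ∧
  (∀ t, hcSet n t ∪ hcSet n s2 ∪ hcSet n s3 = Finset.univ → hcSum n V s1 ≤ hcSum n V t) ∧
  (∀ t, hcSet n s1 ∪ hcSet n t ∪ hcSet n s3 = Finset.univ → hcSum n V s2 ≤ hcSum n V t) ∧
  (∀ t, hcSet n s1 ∪ hcSet n s2 ∪ hcSet n t = Finset.univ → hcSum n V s3 ≤ hcSum n V t)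

/-- The partition of the circular sequence into six consecutive arcs `A,…,F`
(of lengths `lA,…,lF`, starting at `s0`) such that the half-circles of the triple
`(s1,s2,s3)` are `ABC`, `CDE` and `EFA`. -/
def TriplePartition (n : ℕ) [NeZero n] (s1 s2 s3 s0 : Fin n)
    (lA lB lC lD lE lF : ℕ) : Prop :=
  lA + lB + lC + lD + lE + lF = n ∧
  lA = lD + 1 ∧ lC = lF + 1 ∧ lE = lB + 1 ∧ 2 ≤ lA ∧ 2 ≤ lC ∧ 2 ≤ lE ∧
  hcSet n s1 = arcSet n s0 (lA + lB + lC) ∧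
  hcSet n s2 = arcSet n (s0 + ((lA + lB : ℕ) : Fin n)) (lC + lD + lE) ∧
  hcSet n s3 = arcSet n (s0 + ((lA + lB + lC + lD : ℕ) : Fin n)) (lE + lF + lA)

section Helpers
variable (n : ℕ) [NeZero n] (V : Fin n → ℝ)

lemma arcSum_add (s : Fin n) (a c : ℕ) :
    arcSum n V s (a + c) = arcSum n V s a + arcSum n V (s + (a : Fin n)) c := by
  unfold arcSum
  induction c with
  | zero => simp
  | succ c ih =>
    rw [show a + (c+1) = (a+c)+1 by ring, Finset.sum_range_succ, Finset.sum_range_succ, ih,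
      Nat.cast_add, add_assoc]
    simp only [add_assoc]

lemma arcSum_nonneg (hV : ∀ i, 0 ≤ V i) (s : Fin n) (l : ℕ) : 0 ≤ arcSum n V s l :=
  Finset.sum_nonneg fun _ _ => hV _

lemma mem_arcSet_of (s : Fin n) (l m : ℕ) (hm : m < l) : s + (m : Fin n) ∈ arcSet n s l :=
  Finset.mem_image.2 ⟨m, Finset.mem_range.2 hm, rfl⟩

lemma point_shift (s : Fin n) (a c : ℕ) :
    s + ((a : ℕ) : Fin n) + ((c : ℕ) : Fin n) = s + ((a + c : ℕ) : Fin n) := by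
  rw [Nat.cast_add, add_assoc]

lemma mem_arcSet_shift (s : Fin n) (j m l : ℕ) (hj : j ≤ m) (h : m - j < l) :
    s + (m : Fin n) ∈ arcSet n (s + (j : Fin n)) l := by
  have hx : s + (m : Fin n) = (s + (j : Fin n)) + ((m - j : ℕ) : Fin n) := by
    rw [point_shift]
    congr 1
    exact congrArg _ (by omega)
  rw [hx]
  exact mem_arcSet_of n _ _ _ h

lemma arcSum_eq_sum (s : Fin n) (l : ℕ) (hl : l ≤ n) :
    arcSum n V s l = ∑ x ∈ arcSet n s l, V x := by
  unfold arcSum arcSet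
  rw [Finset.sum_image]
  intro a ha bb hb hab
  simp only [Finset.mem_coe, Finset.mem_range] at ha hb
  have h0 := add_left_cancel hab
  have h1 : ((a : Fin n)).val = a := Fin.val_cast_of_lt (lt_of_lt_of_le ha hl)
  have h2 : ((bb : Fin n)).val = bb := Fin.val_cast_of_lt (lt_of_lt_of_le hb hl)
  rw [← h1, ← h2, h0]

end Helpers

/-- nonnegativity of the prefix/suffix difference functions
`h(i) = |B_i| - |E_i|`, `h\'(i) = |B\'_i| - |E\'_i|`, and the middle-arc estimate
in Case 2 of the proof of the `3b/8 + e/2` one-jump strategy. -/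
theorem prefix_difference_functions (n : ℕ) (hn : Odd n) [NeZero n]
    (V : Fin n → ℝ) (hV : ∀ i, 0 ≤ V i)
    (hp : potV n V < (∑ i, V i) / 2)
    (s1 s2 s3 s0 : Fin n) (lA lB lC lD lE lF : ℕ)
    (hT : MinTriple n V s1 s2 s3)
    (hTP : TriplePartition n s1 s2 s3 s0 lA lB lC lD lE lF)
    (sB sE : ℕ → ℝ)
    (hsB : ∀ t, sB t = arcSum n V (s0 + ((lA : ℕ) : Fin n)) t)
    (hsE : ∀ t, sE t = arcSum n V (s0 + ((lA + lB + lC + lD : ℕ) : Fin n)) t)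
    (b e : ℝ) (hb : b = sB lB) (he : e = sE (lB + 1)) :
    (∀ i ≤ lB, 0 ≤ sB i - sE i) ∧
    (∀ i ≤ lB, 0 ≤ (b - sB (lB - i)) - (e - sE (lB + 1 - i))) ∧
    (0 < 3*b/8 - e/2 → ∀ i i' : ℕ, i ≤ lB → i' ≤ lB →
      sB i - sE i ≤ 3*b/8 - e/2 →
      (∀ j ≤ lB, sB j - sE j ≤ 3*b/8 - e/2 → j ≤ i) →
      (b - sB (lB - i')) - (e - sE (lB + 1 - i')) ≤ 3*b/8 - e/2 →
      (∀ j ≤ lB, (b - sB (lB - j)) - (e - sE (lB + 1 - j)) ≤ 3*b/8 - e/2 → j ≤ i') →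
      lB < i + i' →
      b/4 ≤ sE i - sE (lB - i' + 1) ∧
      min (sE (lB - i' + 1)) (e - sE i) ≤ (e - b/4) / 2) := by
  obtain ⟨hsum, hAD, hCF, hEB, hA2, hC2, hE2, hS1, hS2, hS3⟩ := hTP
  have hln1 : lA + lB + lC = hcLen n := by unfold hcLen; omega
  have hln2 : lC + lD + lE = hcLen n := by unfold hcLen; omega
  have hln3 : lE + lF + lA = hcLen n := by unfold hcLen; omega
  have hlen : hcLen n ≤ n := by unfold hcLen; omega
  have QQ : ∀ a c : ℕ, a = c → s0 + ((a : ℕ) : Fin n) = s0 + ((c : ℕ) : Fin n) :=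
    fun a c h => by rw [h]
  have Qn : ∀ a c : ℕ, a + n = c → s0 + ((c : ℕ) : Fin n) = s0 + ((a : ℕ) : Fin n) := by
    intro a c h
    rw [← h, Nat.cast_add, Fin.natCast_self, add_zero]
  have hs2sum : hcSum n V s2 = arcSum n V (s0 + ((lA + lB : ℕ) : Fin n)) (lC + lD + lE) := by
    rw [hcSum, arcSum_eq_sum n V s2 _ hlen,
      arcSum_eq_sum n V _ (lC + lD + lE) (le_trans (le_of_eq hln2) hlen),
      show arcSet n s2 (hcLen n) = hcSet n s2 from rfl, hS2]
  have hs3sum : hcSum n V s3 = arcSum n V (s0 + ((lA + lB + lC + lD : ℕ) : Fin n)) (lE + lF + lA) := by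
    rw [hcSum, arcSum_eq_sum n V s3 _ hlen,
      arcSum_eq_sum n V _ (lE + lF + lA) (le_trans (le_of_eq hln3) hlen),
      show arcSet n s3 (hcLen n) = hcSet n s3 from rfl, hS3]
  -- Part 1
  have part1 : ∀ i ≤ lB, 0 ≤ sB i - sE i := by
    intro i hi
    set t : Fin n := s0 + ((lA + lB + lC + lD + i : ℕ) : Fin n) with ht
    have hcov : hcSet n s1 ∪ hcSet n s2 ∪ hcSet n t = Finset.univ := by
      apply Finset.eq_univ_iff_forall.2
      intro x
      obtain ⟨m, hmn, hxm⟩ : ∃ m, m < n ∧ x = s0 + (m : Fin n) := by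
        refine ⟨(x - s0).val, (x - s0).isLt, ?_⟩
        rw [Fin.cast_val_eq_self]; abel
      simp only [Finset.mem_union]
      by_cases h1 : m < lA + lB + lC
      · exact Or.inl (Or.inl (by rw [hS1, hxm]; exact mem_arcSet_of n s0 _ m h1))
      by_cases h2 : m < lA + lB + lC + lD + lE
      · refine Or.inl (Or.inr ?_)
        rw [hS2, hxm]
        exact mem_arcSet_shift n s0 (lA + lB) m (lC + lD + lE) (by omega) (by omega)
      · refine Or.inr ?_
        rw [show hcSet n t = arcSet n t (hcLen n) from rfl, ← hln3, ht, hxm]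
        exact mem_arcSet_shift n s0 (lA + lB + lC + lD + i) m (lE + lF + lA)
          (by omega) (by omega)
    have hmin := hT.2.2.2.2.2.2.2 t hcov
    have hTt : hcSum n V t =
        arcSum n V (s0 + ((lA + lB + lC + lD + i : ℕ) : Fin n)) (lE - i)
        + arcSum n V (s0 + ((lA + lB + lC + lD + lE : ℕ) : Fin n)) lF
        + arcSum n V (s0 + ((0 : ℕ) : Fin n)) lA + sB i := by
      rw [hcSum, show hcLen n = (lE - i) + (lF + (lA + i)) by omega, arcSum_add, arcSum_add,
        arcSum_add, ht, point_shift, point_shift, point_shift,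
        QQ (lA + lB + lC + lD + i + (lE - i)) (lA + lB + lC + lD + lE) (by omega),
        Qn 0 (lA + lB + lC + lD + i + (lE - i) + lF) (by omega),
        Qn lA (lA + lB + lC + lD + i + (lE - i) + lF + lA) (by omega), hsB i]
      ring
    have hS3dec : hcSum n V s3 =
        sE i + arcSum n V (s0 + ((lA + lB + lC + lD + i : ℕ) : Fin n)) (lE - i)
        + arcSum n V (s0 + ((lA + lB + lC + lD + lE : ℕ) : Fin n)) lF
        + arcSum n V (s0 + ((0 : ℕ) : Fin n)) lA := by
      rw [hs3sum, show lE + lF + lA = (i + (lE - i)) + (lF + lA) by omega, arcSum_add,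
        arcSum_add, arcSum_add, point_shift, point_shift, point_shift,
        QQ (lA + lB + lC + lD + (i + (lE - i))) (lA + lB + lC + lD + lE) (by omega),
        Qn 0 (lA + lB + lC + lD + (i + (lE - i)) + lF) (by omega), hsE i]
      ring
    rw [hTt, hS3dec] at hmin
    linarith
  -- Part 2
  have part2 : ∀ i ≤ lB, 0 ≤ (b - sB (lB - i)) - (e - sE (lB + 1 - i)) := by
    intro i hi
    set t : Fin n := s0 + ((lA + (lB - i) : ℕ) : Fin n) with ht
    have hcov : hcSet n s1 ∪ hcSet n t ∪ hcSet n s3 = Finset.univ := by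
      apply Finset.eq_univ_iff_forall.2
      intro x
      obtain ⟨m, hmn, hxm⟩ : ∃ m, m < n ∧ x = s0 + (m : Fin n) := by
        refine ⟨(x - s0).val, (x - s0).isLt, ?_⟩
        rw [Fin.cast_val_eq_self]; abel
      simp only [Finset.mem_union]
      by_cases h1 : m < lA + lB + lC
      · exact Or.inl (Or.inl (by rw [hS1, hxm]; exact mem_arcSet_of n s0 _ m h1))
      by_cases h2 : m < lA + lB + lC + lD
      · refine Or.inl (Or.inr ?_)
        rw [show hcSet n t = arcSet n t (hcLen n) from rfl, ← hln2, ht, hxm]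
        exact mem_arcSet_shift n s0 (lA + (lB - i)) m (lC + lD + lE) (by omega) (by omega)
      · refine Or.inr ?_
        rw [hS3, hxm]
        exact mem_arcSet_shift n s0 (lA + lB + lC + lD) m (lE + lF + lA) (by omega) (by omega)
    have hmin := hT.2.2.2.2.2.2.1 t hcov
    have hBsplit : sB lB = sB (lB - i) + arcSum n V (s0 + ((lA + (lB - i) : ℕ) : Fin n)) i := by
      have h' : sB (lB - i + i) = sB (lB - i) + arcSum n V (s0 + ((lA + (lB - i) : ℕ) : Fin n)) i := by
        rw [hsB, hsB, arcSum_add, point_shift]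
      rwa [show lB - i + i = lB by omega] at h'
    have hTt : hcSum n V t =
        (sB lB - sB (lB - i))
        + arcSum n V (s0 + ((lA + lB : ℕ) : Fin n)) lC
        + arcSum n V (s0 + ((lA + lB + lC : ℕ) : Fin n)) lD
        + sE (lE - i) := by
      rw [hcSum, show hcLen n = i + (lC + (lD + (lE - i))) by omega, arcSum_add, arcSum_add,
        arcSum_add, ht, point_shift, point_shift, point_shift,
        QQ (lA + (lB - i) + i) (lA + lB) (by omega),
        QQ (lA + (lB - i) + i + lC) (lA + lB + lC) (by omega),
        QQ (lA + (lB - i) + i + lC + lD) (lA + lB + lC + lD) (by omega),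
        hBsplit, hsE (lE - i)]
      ring
    have hS2dec : hcSum n V s2 =
        arcSum n V (s0 + ((lA + lB : ℕ) : Fin n)) lC
        + arcSum n V (s0 + ((lA + lB + lC : ℕ) : Fin n)) lD
        + sE lE := by
      rw [hs2sum, show lC + lD + lE = lC + (lD + lE) by ring, arcSum_add, arcSum_add,
        point_shift, point_shift,
        QQ (lA + lB + lC) (lA + lB + lC) rfl,
        QQ (lA + lB + lC + lD) (lA + lB + lC + lD) rfl,
        hsE lE]
      ring
    rw [hTt, hS2dec] at hmin
    have h1 : sE lE = sE (lB + 1) := by rw [hEB]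
    have h2 : sE (lE - i) = sE (lB + 1 - i) := by rw [hEB]
    rw [h1, h2] at hmin
    rw [hb, he]
    linarith
  refine ⟨part1, part2, ?_⟩
  intro hpos i i' hi hi' hhi _ hki' _ hii
  have hmono : sB (lB - i') ≤ sB i := by
    have h' : sB (lB - i' + (i - (lB - i'))) = sB (lB - i')
        + arcSum n V (s0 + ((lA : ℕ) : Fin n) + (((lB - i' : ℕ)) : Fin n)) (i - (lB - i')) := by
      rw [hsB, hsB, arcSum_add]
    rw [show lB - i' + (i - (lB - i')) = i by omega] at h'
    have hnn := arcSum_nonneg n V hV (s0 + ((lA : ℕ) : Fin n) + (((lB - i' : ℕ)) : Fin n))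
      (i - (lB - i'))
    linarith
  have hidx : lB + 1 - i' = lB - i' + 1 := by omega
  rw [hidx] at hki'
  have hmain : b/4 ≤ sE i - sE (lB - i' + 1) := by linarith
  refine ⟨hmain, ?_⟩
  have hm1 := min_le_left (sE (lB - i' + 1)) (e - sE i)
  have hm2 := min_le_right (sE (lB - i' + 1)) (e - sE i)
  linarith
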